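/- arXiv:0808.2878 — 2 statements merged into one kernel-verified Lean document; each statement's English description precedes it below -/
import Mathlib

section
/- Let 0 < θ₀ < 1. For all j, k, l ∈ 𝒵_L with j₃k₃ ≠ 0, j' ≠ 0, k' ≠ 0, l = j + k and l' ≠ 0, and all r, s ∈ {−1,+1}: if |ω_j^r + ω_k^s| ≤ θ₀ |ω_j^r − ω_k^s| (a near resonance on the resonance cone), then |B_{jkl}^{rs0} + B_{kjl}^{sr0}| ≤ (|M|/2)(4 + 6/(1 − θ₀²)) (|j||k|/|l|) |ω_j^r + ω_k^s|. -/
noncomputable section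
open scoped Classical
set_option maxHeartbeats 4000000

abbrev V3 := Fin 3 → ℝ

/-- Euclidean norm of a vector in ℝ³. -/
def euclNorm (k : V3) : ℝ := Real.sqrt (k 0 ^ 2 + k 1 ^ 2 + k 2 ^ 2)

/-- Horizontal part k' = (k₁, k₂, 0). -/
def horiz (k : V3) : V3 := ![k 0, k 1, 0]

/-- The lattice 𝒵_L of wavevectors. -/
def ZL (L₁ L₂ L₃ : ℝ) : Set V3 :=
  {k | ∃ n : Fin 3 → ℤ,
    k = ![2 * Real.pi * (n 0 : ℝ) / L₁, 2 * Real.pi * (n 1 : ℝ) / L₂,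
          2 * Real.pi * (n 2 : ℝ) / L₃]}

/-- Inertia–gravity frequency ω_k^s = s|k|/k₃. -/
def omg (k : V3) (s : ℝ) : ℝ := s * euclNorm k / k 2

/-- Slow eigenvector X_k^0. -/
def X0 (k : V3) : Fin 3 → ℂ :=
  if horiz k = 0 then ![0, 0, ((Real.sign (k 2) : ℝ) : ℂ)]
  else ![((k 1 / euclNorm k : ℝ) : ℂ), ((-(k 0) / euclNorm k : ℝ) : ℂ), ((k 2 / euclNorm k : ℝ) : ℂ)]

/-- Fast eigenvectors X_k^s, s = ±1. -/
def Xs (k : V3) (s : ℝ) : Fin 3 → ℂ :=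
  if horiz k = 0 then
    ![(((Real.sqrt 2)⁻¹ : ℝ) : ℂ), -Complex.I * s * (((Real.sqrt 2)⁻¹ : ℝ) : ℂ), 0]
  else
    ![(((-(k 1) * k 2 : ℝ) : ℂ) + Complex.I * s * k 0 * euclNorm k) /
        ((Real.sqrt 2 * euclNorm (horiz k) * euclNorm k : ℝ) : ℂ),
      (((k 0 * k 2 : ℝ) : ℂ) + Complex.I * s * k 1 * euclNorm k) /
        ((Real.sqrt 2 * euclNorm (horiz k) * euclNorm k : ℝ) : ℂ),
      ((euclNorm (horiz k) ^ 2 : ℝ) : ℂ) /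
        ((Real.sqrt 2 * euclNorm (horiz k) * euclNorm k : ℝ) : ℂ)]

/-- The incompressible-velocity vector V X_j^r. -/
def VX (j : V3) (r : ℝ) : Fin 3 → ℂ :=
  if horiz j = 0 then Xs j r
  else
    ![(((-(j 1) * j 2 : ℝ) : ℂ) + Complex.I * r * j 0 * euclNorm j) /
        ((Real.sqrt 2 * euclNorm j * euclNorm (horiz j) : ℝ) : ℂ),
      (((j 0 * j 2 : ℝ) : ℂ) + Complex.I * r * j 1 * euclNorm j) /
        ((Real.sqrt 2 * euclNorm j * euclNorm (horiz j) : ℝ) : ℂ),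
      (-Complex.I * r * ((euclNorm (horiz j) ^ 2 * euclNorm j / j 2 : ℝ) : ℂ)) /
        ((Real.sqrt 2 * euclNorm j * euclNorm (horiz j) : ℝ) : ℂ)]

/-- Bilinear pairing a·b on ℂ³. -/
def dotC (a b : Fin 3 → ℂ) : ℂ := a 0 * b 0 + a 1 * b 1 + a 2 * b 2

/-- Pairing of a complex vector with a real vector. -/
def dotR (a : Fin 3 → ℂ) (k : V3) : ℂ :=
  a 0 * (k 0 : ℂ) + a 1 * (k 1 : ℂ) + a 2 * (k 2 : ℂ)

/-- The interaction coefficient B_{jkl}^{rs0}. -/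
def Brs0 (M : ℝ) (j k l : V3) (r s : ℝ) : ℂ :=
  if j + k = l ∧ j 2 * k 2 ≠ 0 ∧ l ≠ 0 then
    Complex.I * M * dotR (VX j r) k * dotC (Xs k s) (X0 l)
  else 0

lemma euclNorm_nonneg (k : V3) : 0 ≤ euclNorm k := Real.sqrt_nonneg _

lemma euclNorm_sq (k : V3) : euclNorm k ^ 2 = k 0 ^ 2 + k 1 ^ 2 + k 2 ^ 2 :=
  Real.sq_sqrt (by positivity)

lemma euclNorm_pos {k : V3} (h : k ≠ 0) : 0 < euclNorm k := by
  apply Real.sqrt_pos.mpr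
  by_contra h'
  push_neg at h'
  have h0 : k 0 = 0 := by
    have : k 0 ^ 2 = 0 := by nlinarith [sq_nonneg (k 0), sq_nonneg (k 1), sq_nonneg (k 2)]
    exact pow_eq_zero_iff two_ne_zero |>.mp this
  have h1 : k 1 = 0 := by
    have : k 1 ^ 2 = 0 := by nlinarith [sq_nonneg (k 0), sq_nonneg (k 1), sq_nonneg (k 2)]
    exact pow_eq_zero_iff two_ne_zero |>.mp this
  have h2 : k 2 = 0 := by
    have : k 2 ^ 2 = 0 := by nlinarith [sq_nonneg (k 0), sq_nonneg (k 1), sq_nonneg (k 2)]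
    exact pow_eq_zero_iff two_ne_zero |>.mp this
  exact h (funext fun i => by fin_cases i <;> assumption)

lemma horiz_apply0 (k : V3) : horiz k 0 = k 0 := rfl

lemma horiz_apply1 (k : V3) : horiz k 1 = k 1 := rfl

lemma horiz_apply2 (k : V3) : horiz k 2 = 0 := rfl

lemma euclNorm_horiz_sq (k : V3) : euclNorm (horiz k) ^ 2 = k 0 ^ 2 + k 1 ^ 2 := by
  rw [euclNorm_sq, horiz_apply0, horiz_apply1, horiz_apply2]; ring

/-- Slow eigenvector X_k^0. -/

lemma dotR_VX (j k : V3) (r : ℝ) (hj' : horiz j ≠ 0) (hj3 : j 2 ≠ 0) :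
    dotR (VX j r) k =
      (((j 2 ^ 2 * (j 0 * k 1 - j 1 * k 0) : ℝ) : ℂ) +
        ((r * euclNorm j * (j 2 * (j 0 * k 0 + j 1 * k 1) - euclNorm (horiz j) ^ 2 * k 2) : ℝ) : ℂ) *
          Complex.I) /
        ((Real.sqrt 2 * euclNorm j * euclNorm (horiz j) * j 2 : ℝ) : ℂ) := by
  have h1 : euclNorm j ≠ 0 := ne_of_gt (euclNorm_pos (fun h => hj' (by rw [h]; funext i; fin_cases i <;> simp [horiz])))
  have h2 : euclNorm (horiz j) ≠ 0 := ne_of_gt (euclNorm_pos hj')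
  have h3 : Real.sqrt 2 ≠ 0 := by positivity
  simp only [dotR, VX, if_neg hj', Matrix.cons_val_zero, Matrix.cons_val_one, Matrix.head_cons,
    Matrix.cons_val_two, Matrix.tail_cons]
  have hj3c : (j 2 : ℂ) ≠ 0 := Complex.ofReal_ne_zero.mpr hj3
  have h1c : (euclNorm j : ℂ) ≠ 0 := Complex.ofReal_ne_zero.mpr h1
  have h2c : (euclNorm (horiz j) : ℂ) ≠ 0 := Complex.ofReal_ne_zero.mpr h2
  have h3c : ((Real.sqrt 2 : ℝ) : ℂ) ≠ 0 := Complex.ofReal_ne_zero.mpr h3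
  have hd : ((Real.sqrt 2 * euclNorm j * euclNorm (horiz j) : ℝ) : ℂ) ≠ 0 := by
    push_cast; exact mul_ne_zero (mul_ne_zero h3c h1c) h2c
  have hd2 : ((Real.sqrt 2 * euclNorm j * euclNorm (horiz j) * j 2 : ℝ) : ℂ) ≠ 0 := by
    push_cast; exact mul_ne_zero (by push_cast at hd; exact hd) hj3c
  simp only [div_mul_eq_mul_div, ← add_div, ← sub_div, neg_mul, neg_div, ← sub_eq_add_neg]
  rw [div_eq_div_iff hd hd2]
  push_cast
  field_simp
  ring

lemma dotC_Xs_X0 (k l : V3) (s : ℝ) (hk' : horiz k ≠ 0) (hl' : horiz l ≠ 0) :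
    dotC (Xs k s) (X0 l) =
      (((euclNorm (horiz k) ^ 2 * l 2 - k 2 * (k 0 * l 0 + k 1 * l 1) : ℝ) : ℂ) +
        ((s * euclNorm k * (k 0 * l 1 - k 1 * l 0) : ℝ) : ℂ) * Complex.I) /
        ((Real.sqrt 2 * euclNorm (horiz k) * euclNorm k * euclNorm l : ℝ) : ℂ) := by
  have h1 : euclNorm k ≠ 0 := ne_of_gt (euclNorm_pos (fun h => hk' (by rw [h]; funext i; fin_cases i <;> simp [horiz])))
  have h2 : euclNorm (horiz k) ≠ 0 := ne_of_gt (euclNorm_pos hk')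
  have h4 : euclNorm l ≠ 0 := ne_of_gt (euclNorm_pos (fun h => hl' (by rw [h]; funext i; fin_cases i <;> simp [horiz])))
  have h3 : Real.sqrt 2 ≠ 0 := by positivity
  simp only [dotC, Xs, X0, if_neg hk', if_neg hl', Matrix.cons_val_zero, Matrix.cons_val_one,
    Matrix.head_cons, Matrix.cons_val_two, Matrix.tail_cons]
  have h1c : (euclNorm k : ℂ) ≠ 0 := Complex.ofReal_ne_zero.mpr h1
  have h2c : (euclNorm (horiz k) : ℂ) ≠ 0 := Complex.ofReal_ne_zero.mpr h2
  have h4c : (euclNorm l : ℂ) ≠ 0 := Complex.ofReal_ne_zero.mpr h4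
  have h3c : ((Real.sqrt 2 : ℝ) : ℂ) ≠ 0 := Complex.ofReal_ne_zero.mpr h3
  have hd : ((Real.sqrt 2 * euclNorm (horiz k) * euclNorm k : ℝ) : ℂ) ≠ 0 := by
    push_cast; exact mul_ne_zero (mul_ne_zero h3c h2c) h1c
  have hd2 : ((Real.sqrt 2 * euclNorm (horiz k) * euclNorm k * euclNorm l : ℝ) : ℂ) ≠ 0 := by
    push_cast; exact mul_ne_zero (by push_cast at hd; exact hd) h4c
  simp only [div_mul_eq_mul_div, ← add_div, ← sub_div, neg_mul, neg_div, ← sub_eq_add_neg]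
  rw [div_eq_div_iff hd hd2]
  push_cast
  field_simp
  ring

lemma ne_zero_of_horiz {k : V3} (h : horiz k ≠ 0) : k ≠ 0 := by
  intro h0
  apply h
  rw [h0]
  funext i
  fin_cases i <;> simp [horiz]

lemma core_identity (j k : V3) (r s : ℝ) (hr : r = 1 ∨ r = -1) (hs : s = 1 ∨ s = -1) :
    Complex.I *
      ((((j 2 ^ 2 * (j 0 * k 1 - j 1 * k 0) : ℝ) : ℂ) +
          ((r * euclNorm j * (j 2 * (j 0 * k 0 + j 1 * k 1) - euclNorm (horiz j) ^ 2 * k 2) : ℝ) : ℂ) *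
            Complex.I) *
        ((((euclNorm (horiz k) ^ 2 * (j 2 + k 2) - k 2 * (k 0 * (j 0 + k 0) + k 1 * (j 1 + k 1)) : ℝ) : ℂ)) +
          ((s * euclNorm k * (k 0 * (j 1 + k 1) - k 1 * (j 0 + k 0)) : ℝ) : ℂ) * Complex.I) *
        ((k 2 : ℝ) : ℂ) +
      (((k 2 ^ 2 * (k 0 * j 1 - k 1 * j 0) : ℝ) : ℂ) +
          ((s * euclNorm k * (k 2 * (k 0 * j 0 + k 1 * j 1) - euclNorm (horiz k) ^ 2 * j 2) : ℝ) : ℂ) *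
            Complex.I) *
        ((((euclNorm (horiz j) ^ 2 * (j 2 + k 2) - j 2 * (j 0 * (j 0 + k 0) + j 1 * (j 1 + k 1)) : ℝ) : ℂ)) +
          ((r * euclNorm j * (j 0 * (j 1 + k 1) - j 1 * (j 0 + k 0)) : ℝ) : ℂ) * Complex.I) *
        ((j 2 : ℝ) : ℂ)) =
    (((r * euclNorm j * k 2 + s * euclNorm k * j 2) *
        ((j 0 * k 1 - j 1 * k 0) * (j 0 * k 1 - j 1 * k 0) * j 2 * k 2 +
          (j 2 * (j 0 * k 0 + j 1 * k 1) - euclNorm (horiz j) ^ 2 * k 2) *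
            (k 2 * (j 0 * k 0 + j 1 * k 1) - euclNorm (horiz k) ^ 2 * j 2)) : ℝ) : ℂ) +
    (((r * euclNorm j * k 2 + s * euclNorm k * j 2) * (j 0 * k 1 - j 1 * k 0) *
        (r * euclNorm (horiz k) ^ 2 * euclNorm j * j 2 - s * euclNorm (horiz j) ^ 2 * euclNorm k * k 2) : ℝ) : ℂ) *
      Complex.I := by
  have hI : Complex.I ^ 2 = -1 := Complex.I_sq
  have hrC : (r : ℂ) ^ 2 = 1 := by rcases hr with h | h <;> rw [h] <;> norm_num
  have hsC : (s : ℂ) ^ 2 = 1 := by rcases hs with h | h <;> rw [h] <;> norm_num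
  have hnjC : (euclNorm j : ℂ) ^ 2 = (j 0 : ℂ) ^ 2 + (j 1 : ℂ) ^ 2 + (j 2 : ℂ) ^ 2 := by
    exact_mod_cast congrArg (fun x : ℝ => (x : ℂ)) (euclNorm_sq j)
  have hnkC : (euclNorm k : ℂ) ^ 2 = (k 0 : ℂ) ^ 2 + (k 1 : ℂ) ^ 2 + (k 2 : ℂ) ^ 2 := by
    exact_mod_cast congrArg (fun x : ℝ => (x : ℂ)) (euclNorm_sq k)
  have hajC : (euclNorm (horiz j) : ℂ) ^ 2 = (j 0 : ℂ) ^ 2 + (j 1 : ℂ) ^ 2 := by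
    exact_mod_cast congrArg (fun x : ℝ => (x : ℂ)) (euclNorm_horiz_sq j)
  have hbkC : (euclNorm (horiz k) : ℂ) ^ 2 = (k 0 : ℂ) ^ 2 + (k 1 : ℂ) ^ 2 := by
    exact_mod_cast congrArg (fun x : ℝ => (x : ℂ)) (euclNorm_horiz_sq k)
  push_cast
  linear_combination
      ((-1)*(euclNorm k:ℂ)*(s:ℂ)*(j 1:ℂ)^2*(j 2:ℂ)^2*(k 1:ℂ)^2*(k 2:ℂ) + (-1)*(euclNorm k:ℂ)*(s:ℂ)*(j 1:ℂ)^2*(j 2:ℂ)^2*(k 0:ℂ)^2*(k 2:ℂ) + (-1)*(euclNorm k:ℂ)*(s:ℂ)*(j 1:ℂ)^3*(j 2:ℂ)^2*(k 1:ℂ)*(k 2:ℂ) + (-1)*(euclNorm k:ℂ)*(s:ℂ)*(j 0:ℂ)*(j 1:ℂ)^2*(j 2:ℂ)^2*(k 0:ℂ)*(k 2:ℂ) + (-1)*(euclNorm k:ℂ)*(s:ℂ)*(j 0:ℂ)^2*(j 2:ℂ)^2*(k 1:ℂ)^2*(k 2:ℂ) + (-1)*(euclNorm k:ℂ)*(s:ℂ)*(j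 0:ℂ)^2*(j 2:ℂ)^2*(k 0:ℂ)^2*(k 2:ℂ) + (-1)*(euclNorm k:ℂ)*(s:ℂ)*(j 0:ℂ)^2*(j 1:ℂ)*(j 2:ℂ)^2*(k 1:ℂ)*(k 2:ℂ) + (-1)*(euclNorm k:ℂ)*(s:ℂ)*(j 0:ℂ)^3*(j 2:ℂ)^2*(k 0:ℂ)*(k 2:ℂ) + (euclNorm k:ℂ)*(euclNorm (horiz k):ℂ)^2*(s:ℂ)*(j 1:ℂ)*(j 2:ℂ)^3*(k 1:ℂ) + (euclNorm k:ℂ)*(euclNorm (horiz k):ℂ)^2*(s:ℂ)*(j 1:ℂ)^2*(j 2:ℂ)^3 + (euclNorm k:ℂ)*(euclNorm (horiz k):ℂ)^2*(s:ℂ)*(j 0:ℂ)*(j 2:ℂ)^3*(k 0:ℂ) + (euclNorm k:ℂ)*(euclNorm (horiz k):ℂ)^2*(s:ℂ)*(j 0:ℂ)^2*(j 2:ℂ)^3 + (euclNorm k:ℂ)*(euclNorm (horiz j):ℂ)^2*(s:ℂ)*(j 1:ℂ)*(j 2:ℂ)*(k 1:ℂ)*(k 2:ℂ)^2 + (euclNorm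 k:ℂ)*(euclNorm (horiz j):ℂ)^2*(s:ℂ)*(j 1:ℂ)*(j 2:ℂ)^2*(k 1:ℂ)*(k 2:ℂ) + (euclNorm k:ℂ)*(euclNorm (horiz j):ℂ)^2*(s:ℂ)*(j 0:ℂ)*(j 2:ℂ)*(k 0:ℂ)*(k 2:ℂ)^2 + (euclNorm k:ℂ)*(euclNorm (horiz j):ℂ)^2*(s:ℂ)*(j 0:ℂ)*(j 2:ℂ)^2*(k 0:ℂ)*(k 2:ℂ) + (-1)*(euclNorm k:ℂ)*(euclNorm (horiz j):ℂ)^2*(euclNorm (horiz k):ℂ)^2*(s:ℂ)*(j 2:ℂ)^2*(k 2:ℂ) + (-1)*(euclNorm k:ℂ)*(euclNorm (horiz j):ℂ)^2*(euclNorm (horiz k):ℂ)^2*(s:ℂ)*(j 2:ℂ)^3 + (-1)*(euclNorm j:ℂ)*(r:ℂ)*(j 1:ℂ)*(j 2:ℂ)*(k 1:ℂ)^3*(k 2:ℂ)^2 + (-1)*(euclNorm j:ℂ)*(r:ℂ)*(j 1:ℂ)*(j 2:ℂ)*(k 0:ℂ)^2*(k 1:ℂ)*(k 2:ℂ)^2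 + (-1)*(euclNorm j:ℂ)*(r:ℂ)*(j 1:ℂ)^2*(j 2:ℂ)*(k 1:ℂ)^2*(k 2:ℂ)^2 + (-1)*(euclNorm j:ℂ)*(r:ℂ)*(j 1:ℂ)^2*(j 2:ℂ)*(k 0:ℂ)^2*(k 2:ℂ)^2 + (-1)*(euclNorm j:ℂ)*(r:ℂ)*(j 0:ℂ)*(j 2:ℂ)*(k 0:ℂ)*(k 1:ℂ)^2*(k 2:ℂ)^2 + (-1)*(euclNorm j:ℂ)*(r:ℂ)*(j 0:ℂ)*(j 2:ℂ)*(k 0:ℂ)^3*(k 2:ℂ)^2 + (-1)*(euclNorm j:ℂ)*(r:ℂ)*(j 0:ℂ)^2*(j 2:ℂ)*(k 1:ℂ)^2*(k 2:ℂ)^2 + (-1)*(euclNorm j:ℂ)*(r:ℂ)*(j 0:ℂ)^2*(j 2:ℂ)*(k 0:ℂ)^2*(k 2:ℂ)^2 + (euclNorm j:ℂ)*(euclNorm (horiz k):ℂ)^2*(r:ℂ)*(j 1:ℂ)*(j 2:ℂ)*(k 1:ℂ)*(k 2:ℂ)^2 + (euclNorm j:ℂ)*(euclNorm (horiz k):ℂ)^2*(r:ℂ)*(j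 1:ℂ)*(j 2:ℂ)^2*(k 1:ℂ)*(k 2:ℂ) + (euclNorm j:ℂ)*(euclNorm (horiz k):ℂ)^2*(r:ℂ)*(j 0:ℂ)*(j 2:ℂ)*(k 0:ℂ)*(k 2:ℂ)^2 + (euclNorm j:ℂ)*(euclNorm (horiz k):ℂ)^2*(r:ℂ)*(j 0:ℂ)*(j 2:ℂ)^2*(k 0:ℂ)*(k 2:ℂ) + (euclNorm j:ℂ)*(euclNorm (horiz j):ℂ)^2*(r:ℂ)*(k 1:ℂ)^2*(k 2:ℂ)^3 + (euclNorm j:ℂ)*(euclNorm (horiz j):ℂ)^2*(r:ℂ)*(k 0:ℂ)^2*(k 2:ℂ)^3 + (euclNorm j:ℂ)*(euclNorm (horiz j):ℂ)^2*(r:ℂ)*(j 1:ℂ)*(k 1:ℂ)*(k 2:ℂ)^3 + (euclNorm j:ℂ)*(euclNorm (horiz j):ℂ)^2*(r:ℂ)*(j 0:ℂ)*(k 0:ℂ)*(k 2:ℂ)^3 + (-1)*(euclNorm j:ℂ)*(euclNorm (horiz j):ℂ)^2*(euclNorm (horiz k):ℂ)^2*(r:ℂ)*(k 2:ℂ)^3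 + (-1)*(euclNorm j:ℂ)*(euclNorm (horiz j):ℂ)^2*(euclNorm (horiz k):ℂ)^2*(r:ℂ)*(j 2:ℂ)*(k 2:ℂ)^2 + Complex.I*(euclNorm j:ℂ)*(euclNorm k:ℂ)*(euclNorm (horiz k):ℂ)^2*(r:ℂ)*(s:ℂ)*(j 1:ℂ)*(j 2:ℂ)^2*(k 0:ℂ) + (-1)*Complex.I*(euclNorm j:ℂ)*(euclNorm k:ℂ)*(euclNorm (horiz k):ℂ)^2*(r:ℂ)*(s:ℂ)*(j 0:ℂ)*(j 2:ℂ)^2*(k 1:ℂ) + (-1)*Complex.I*(euclNorm j:ℂ)*(euclNorm k:ℂ)*(euclNorm (horiz j):ℂ)^2*(r:ℂ)*(s:ℂ)*(j 1:ℂ)*(k 0:ℂ)*(k 2:ℂ)^2 + Complex.I*(euclNorm j:ℂ)*(euclNorm k:ℂ)*(euclNorm (horiz j):ℂ)^2*(r:ℂ)*(s:ℂ)*(j 0:ℂ)*(k 1:ℂ)*(k 2:ℂ)^2) * hI +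
      (Complex.I*(euclNorm j:ℂ)^2*(euclNorm (horiz k):ℂ)^2*(j 1:ℂ)*(j 2:ℂ)*(k 0:ℂ)*(k 2:ℂ) + (-1)*Complex.I*(euclNorm j:ℂ)^2*(euclNorm (horiz k):ℂ)^2*(j 0:ℂ)*(j 2:ℂ)*(k 1:ℂ)*(k 2:ℂ)) * hrC +
      ((-1)*Complex.I*(euclNorm k:ℂ)^2*(euclNorm (horiz j):ℂ)^2*(j 1:ℂ)*(j 2:ℂ)*(k 0:ℂ)*(k 2:ℂ) + Complex.I*(euclNorm k:ℂ)^2*(euclNorm (horiz j):ℂ)^2*(j 0:ℂ)*(j 2:ℂ)*(k 1:ℂ)*(k 2:ℂ)) * hsC +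
      (Complex.I*(euclNorm (horiz k):ℂ)^2*(j 1:ℂ)*(j 2:ℂ)*(k 0:ℂ)*(k 2:ℂ) + (-1)*Complex.I*(euclNorm (horiz k):ℂ)^2*(j 0:ℂ)*(j 2:ℂ)*(k 1:ℂ)*(k 2:ℂ)) * hnjC +
      ((-1)*Complex.I*(euclNorm (horiz j):ℂ)^2*(j 1:ℂ)*(j 2:ℂ)*(k 0:ℂ)*(k 2:ℂ) + Complex.I*(euclNorm (horiz j):ℂ)^2*(j 0:ℂ)*(j 2:ℂ)*(k 1:ℂ)*(k 2:ℂ)) * hnkC +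
      ((-1)*(euclNorm k:ℂ)*(s:ℂ)*(j 1:ℂ)*(j 2:ℂ)^2*(k 1:ℂ)*(k 2:ℂ) + (-1)*(euclNorm k:ℂ)*(s:ℂ)*(j 0:ℂ)*(j 2:ℂ)^2*(k 0:ℂ)*(k 2:ℂ) + (euclNorm k:ℂ)*(euclNorm (horiz k):ℂ)^2*(s:ℂ)*(j 2:ℂ)^3 + (-1)*(euclNorm j:ℂ)*(r:ℂ)*(k 1:ℂ)^2*(k 2:ℂ)^3 + (-1)*(euclNorm j:ℂ)*(r:ℂ)*(k 0:ℂ)^2*(k 2:ℂ)^3 + (euclNorm j:ℂ)*(euclNorm (horiz k):ℂ)^2*(r:ℂ)*(k 2:ℂ)^3 + (-1)*Complex.I*(j 1:ℂ)*(j 2:ℂ)*(k 0:ℂ)*(k 1:ℂ)^2*(k 2:ℂ) + (-1)*Complex.I*(j 1:ℂ)*(j 2:ℂ)*(k 0:ℂ)^3*(k 2:ℂ) + Complex.I*(j 1:ℂ)*(j 2:ℂ)^2*(k 0:ℂ)*(k 2:ℂ)^2 + Complex.I*(j 0:ℂ)*(j 2:ℂ)*(k 1:ℂ)^3*(k 2:ℂ)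 + Complex.I*(j 0:ℂ)*(j 2:ℂ)*(k 0:ℂ)^2*(k 1:ℂ)*(k 2:ℂ) + (-1)*Complex.I*(j 0:ℂ)*(j 2:ℂ)^2*(k 1:ℂ)*(k 2:ℂ)^2) * hajC +
      ((-1)*(euclNorm j:ℂ)*(r:ℂ)*(j 1:ℂ)*(j 2:ℂ)*(k 1:ℂ)*(k 2:ℂ)^2 + (euclNorm j:ℂ)*(r:ℂ)*(j 1:ℂ)^2*(k 2:ℂ)^3 + (-1)*(euclNorm j:ℂ)*(r:ℂ)*(j 0:ℂ)*(j 2:ℂ)*(k 0:ℂ)*(k 2:ℂ)^2 + (euclNorm j:ℂ)*(r:ℂ)*(j 0:ℂ)^2*(k 2:ℂ)^3 + (-1)*Complex.I*(j 1:ℂ)*(j 2:ℂ)^2*(k 0:ℂ)*(k 2:ℂ)^2 + Complex.I*(j 1:ℂ)^3*(j 2:ℂ)*(k 0:ℂ)*(k 2:ℂ) + Complex.I*(j 0:ℂ)*(j 2:ℂ)^2*(k 1:ℂ)*(k 2:ℂ)^2 + (-1)*Complex.I*(j 0:ℂ)*(j 1:ℂ)^2*(j 2:ℂ)*(k 1:ℂ)*(k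 2:ℂ) + Complex.I*(j 0:ℂ)^2*(j 1:ℂ)*(j 2:ℂ)*(k 0:ℂ)*(k 2:ℂ) + (-1)*Complex.I*(j 0:ℂ)^3*(j 2:ℂ)*(k 1:ℂ)*(k 2:ℂ)) * hbkC

lemma frac_combine (m n1 n2 n3 n4 pq d1 d2 d3 d4 k3 j3 : ℂ)
    (h1 : d1 ≠ 0) (h2 : d2 ≠ 0) (h3 : d3 ≠ 0) (h4 : d4 ≠ 0)
    (hj3 : j3 ≠ 0) (hk3 : k3 ≠ 0)
    (hAB : d1 * d2 * k3 = d3 * d4 * j3)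
    (hcore : Complex.I * (n1 * n2 * k3 + n3 * n4 * j3) = pq) :
    Complex.I * m * (n1 / d1) * (n2 / d2) + Complex.I * m * (n3 / d3) * (n4 / d4) =
      m * (pq / (d1 * d2 * k3)) := by
  rw [← hcore]
  field_simp
  linear_combination (m * n3 * n4) * hAB

lemma abs_comp2_le (k : V3) : |k 2| ≤ euclNorm k := by
  rw [← Real.sqrt_sq_eq_abs, euclNorm]
  exact Real.sqrt_le_sqrt (by nlinarith [sq_nonneg (k 0), sq_nonneg (k 1)])

lemma euclNorm_horiz_le (k : V3) : euclNorm (horiz k) ≤ euclNorm k := by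
  rw [euclNorm, euclNorm]
  apply Real.sqrt_le_sqrt
  rw [horiz_apply0, horiz_apply1, horiz_apply2]
  nlinarith [sq_nonneg (k 2)]

lemma abs_wedge_le (j k : V3) : |j 0 * k 1 - j 1 * k 0| ≤ euclNorm (horiz j) * euclNorm (horiz k) := by
  have h1 : (j 0 * k 1 - j 1 * k 0) ^ 2 ≤ (euclNorm (horiz j) * euclNorm (horiz k)) ^ 2 := by
    rw [mul_pow, euclNorm_horiz_sq, euclNorm_horiz_sq]
    nlinarith [sq_nonneg (j 0 * k 0 + j 1 * k 1)]
  calc |j 0 * k 1 - j 1 * k 0| = Real.sqrt ((j 0 * k 1 - j 1 * k 0) ^ 2) :=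
        (Real.sqrt_sq_eq_abs _).symm
    _ ≤ Real.sqrt ((euclNorm (horiz j) * euclNorm (horiz k)) ^ 2) := Real.sqrt_le_sqrt h1
    _ = euclNorm (horiz j) * euclNorm (horiz k) := Real.sqrt_sq (mul_nonneg (euclNorm_nonneg _) (euclNorm_nonneg _))

lemma abs_dot_le (j k : V3) : |j 0 * k 0 + j 1 * k 1| ≤ euclNorm (horiz j) * euclNorm (horiz k) := by
  have h1 : (j 0 * k 0 + j 1 * k 1) ^ 2 ≤ (euclNorm (horiz j) * euclNorm (horiz k)) ^ 2 := by
    rw [mul_pow, euclNorm_horiz_sq, euclNorm_horiz_sq]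
    nlinarith [sq_nonneg (j 0 * k 1 - j 1 * k 0)]
  calc |j 0 * k 0 + j 1 * k 1| = Real.sqrt ((j 0 * k 0 + j 1 * k 1) ^ 2) :=
        (Real.sqrt_sq_eq_abs _).symm
    _ ≤ Real.sqrt ((euclNorm (horiz j) * euclNorm (horiz k)) ^ 2) := Real.sqrt_le_sqrt h1
    _ = euclNorm (horiz j) * euclNorm (horiz k) := Real.sqrt_sq (mul_nonneg (euclNorm_nonneg _) (euclNorm_nonneg _))

lemma horiz_abs_le_half (k : V3) : euclNorm (horiz k) * |k 2| ≤ euclNorm k ^ 2 / 2 := by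
  nlinarith [sq_nonneg (euclNorm (horiz k) - |k 2|), euclNorm_horiz_sq k, sq_abs (k 2), euclNorm_sq k]

/-- near-resonance bound in the generic case (eq. (A.10)). -/
theorem near_resonance_generic
    (θ₀ : ℝ) (hθ0 : 0 < θ₀) (hθ1 : θ₀ < 1)
    (L₁ L₂ L₃ : ℝ) (hL₁ : 0 < L₁) (hL₂ : 0 < L₂) (hL₃ : 0 < L₃)
    (j k l : V3) (hj : j ∈ ZL L₁ L₂ L₃) (hk : k ∈ ZL L₁ L₂ L₃) (hl : l ∈ ZL L₁ L₂ L₃)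
    (hjk3 : j 2 * k 2 ≠ 0) (hj' : horiz j ≠ 0) (hk' : horiz k ≠ 0)
    (hlsum : l = j + k) (hl' : horiz l ≠ 0)
    (r s : ℝ) (hr : r = 1 ∨ r = -1) (hs : s = 1 ∨ s = -1)
    (hnear : |omg j r + omg k s| ≤ θ₀ * |omg j r - omg k s|) :
    ‖Brs0 (L₁ * L₂ * L₃) j k l r s + Brs0 (L₁ * L₂ * L₃) k j l s r‖ ≤
      (L₁ * L₂ * L₃) / 2 * (4 + 6 / (1 - θ₀ ^ 2)) *
        (euclNorm j * euclNorm k / euclNorm l) * |omg j r + omg k s| := by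
  subst hlsum
  have hj3 : j 2 ≠ 0 := fun h => hjk3 (by rw [h]; ring)
  have hk3 : k 2 ≠ 0 := fun h => hjk3 (by rw [h]; ring)
  have hl0 : j + k ≠ 0 := ne_zero_of_horiz hl'
  have hM : 0 < L₁ * L₂ * L₃ := by positivity
  set M := L₁ * L₂ * L₃ with hMdef
  -- positivity facts
  have njpos : 0 < euclNorm j := euclNorm_pos (ne_zero_of_horiz hj')
  have nkpos : 0 < euclNorm k := euclNorm_pos (ne_zero_of_horiz hk')
  have nlpos : 0 < euclNorm (j + k) := euclNorm_pos hl0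
  have ajpos : 0 < euclNorm (horiz j) := euclNorm_pos hj'
  have bkpos : 0 < euclNorm (horiz k) := euclNorm_pos hk'
  -- unfold the B's
  have hB1 : Brs0 M j k (j + k) r s =
      Complex.I * M * dotR (VX j r) k * dotC (Xs k s) (X0 (j + k)) := by
    rw [Brs0, if_pos ⟨rfl, hjk3, hl0⟩]
  have hB2 : Brs0 M k j (j + k) s r =
      Complex.I * M * dotR (VX k s) j * dotC (Xs j r) (X0 (j + k)) := by
    rw [Brs0, if_pos ⟨add_comm k j, by rwa [mul_comm], hl0⟩]
  have e1 := dotR_VX j k r hj' hj3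
  have e3 := dotR_VX k j s hk' hk3
  have e2 := dotC_Xs_X0 k (j + k) s hk' hl'
  have e4 := dotC_Xs_X0 j (j + k) r hj' hl'
  simp only [Pi.add_apply] at e2 e4
  -- the exact value of the sum
  have hq2C : ((Real.sqrt 2 : ℝ) : ℂ) * ((Real.sqrt 2 : ℝ) : ℂ) = 2 := by
    rw [← Complex.ofReal_mul, Real.mul_self_sqrt (by norm_num)]
    norm_num
  set P : ℝ := (r * euclNorm j * k 2 + s * euclNorm k * j 2) *
      ((j 0 * k 1 - j 1 * k 0) * (j 0 * k 1 - j 1 * k 0) * j 2 * k 2 +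
        (j 2 * (j 0 * k 0 + j 1 * k 1) - euclNorm (horiz j) ^ 2 * k 2) *
          (k 2 * (j 0 * k 0 + j 1 * k 1) - euclNorm (horiz k) ^ 2 * j 2)) with hPdef
  set Q : ℝ := (r * euclNorm j * k 2 + s * euclNorm k * j 2) * (j 0 * k 1 - j 1 * k 0) *
      (r * euclNorm (horiz k) ^ 2 * euclNorm j * j 2 - s * euclNorm (horiz j) ^ 2 * euclNorm k * k 2) with hQdef
  set D : ℝ := 2 * (euclNorm j * euclNorm k * euclNorm (horiz j) * euclNorm (horiz k) * euclNorm (j + k)) *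
      (j 2 * k 2) with hDdef
  have hDne : D ≠ 0 := by
    rw [hDdef]
    exact mul_ne_zero (mul_ne_zero two_ne_zero (by positivity)) hjk3
  have hj3c : ((j 2 : ℝ) : ℂ) ≠ 0 := Complex.ofReal_ne_zero.mpr hj3
  have hk3c : ((k 2 : ℝ) : ℂ) ≠ 0 := Complex.ofReal_ne_zero.mpr hk3
  have hd1 : ((Real.sqrt 2 * euclNorm j * euclNorm (horiz j) * j 2 : ℝ) : ℂ) ≠ 0 := by
    apply Complex.ofReal_ne_zero.mpr
    have : Real.sqrt 2 > 0 := by positivity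
    exact mul_ne_zero (by positivity) hj3
  have hd2 : ((Real.sqrt 2 * euclNorm (horiz k) * euclNorm k * euclNorm (j + k) : ℝ) : ℂ) ≠ 0 := by
    apply Complex.ofReal_ne_zero.mpr
    positivity
  have hd3 : ((Real.sqrt 2 * euclNorm k * euclNorm (horiz k) * k 2 : ℝ) : ℂ) ≠ 0 := by
    apply Complex.ofReal_ne_zero.mpr
    exact mul_ne_zero (by positivity) hk3
  have hd4 : ((Real.sqrt 2 * euclNorm (horiz j) * euclNorm j * euclNorm (j + k) : ℝ) : ℂ) ≠ 0 := by
    apply Complex.ofReal_ne_zero.mpr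
    positivity
  have hAB : ((Real.sqrt 2 * euclNorm j * euclNorm (horiz j) * j 2 : ℝ) : ℂ) *
        ((Real.sqrt 2 * euclNorm (horiz k) * euclNorm k * euclNorm (j + k) : ℝ) : ℂ) * ((k 2 : ℝ) : ℂ) =
      ((Real.sqrt 2 * euclNorm k * euclNorm (horiz k) * k 2 : ℝ) : ℂ) *
        ((Real.sqrt 2 * euclNorm (horiz j) * euclNorm j * euclNorm (j + k) : ℝ) : ℂ) * ((j 2 : ℝ) : ℂ) := by
    push_cast
    ring
  have hDeq : ((Real.sqrt 2 * euclNorm j * euclNorm (horiz j) * j 2 : ℝ) : ℂ) *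
        ((Real.sqrt 2 * euclNorm (horiz k) * euclNorm k * euclNorm (j + k) : ℝ) : ℂ) * ((k 2 : ℝ) : ℂ) =
      ((D : ℝ) : ℂ) := by
    rw [hDdef]
    push_cast
    linear_combination ((euclNorm j : ℂ) * (euclNorm (horiz j) : ℂ) * (j 2 : ℂ) * (euclNorm (horiz k) : ℂ) *
      (euclNorm k : ℂ) * (euclNorm (j + k) : ℂ) * (k 2 : ℂ)) * hq2C
  have hcore := core_identity j k r s hr hs
  have key : Brs0 M j k (j + k) r s + Brs0 M k j (j + k) s r =
      (M : ℂ) * ((((P : ℝ) : ℂ) + ((Q : ℝ) : ℂ) * Complex.I) / ((D : ℝ) : ℂ)) := by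
    rw [hB1, hB2, e1, e2, e3, e4, ← hDeq]
    rw [hPdef, hQdef]
    exact frac_combine _ _ _ _ _ _ _ _ _ _ _ _ hd1 hd2 hd3 hd4 hj3c hk3c hAB hcore
  -- real abbreviations and bounds
  have hw := abs_wedge_le j k
  have hp := abs_dot_le j k
  have ha3 := abs_comp2_le j
  have hb3 := abs_comp2_le k
  have hajn := euclNorm_horiz_le j
  have hbkn := euclNorm_horiz_le k
  have hhalfj := horiz_abs_le_half j
  have hhalfk := horiz_abs_le_half k
  have hr1 : |r| = 1 := by rcases hr with h | h <;> simp [h]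
  have hs1 : |s| = 1 := by rcases hs with h | h <;> simp [h]
  have hA : |j 2 * (j 0 * k 0 + j 1 * k 1) - euclNorm (horiz j) ^ 2 * k 2| ≤
      euclNorm (horiz j) * (euclNorm (horiz k) * |j 2| + euclNorm (horiz j) * |k 2|) := by
    calc |j 2 * (j 0 * k 0 + j 1 * k 1) - euclNorm (horiz j) ^ 2 * k 2| ≤
        |j 2 * (j 0 * k 0 + j 1 * k 1)| + |euclNorm (horiz j) ^ 2 * k 2| := abs_sub _ _
      _ = |j 2| * |j 0 * k 0 + j 1 * k 1| + euclNorm (horiz j) ^ 2 * |k 2| := by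
          rw [abs_mul, abs_mul, abs_of_nonneg (pow_nonneg (euclNorm_nonneg _) 2)]
      _ ≤ |j 2| * (euclNorm (horiz j) * euclNorm (horiz k)) + euclNorm (horiz j) ^ 2 * |k 2| := by
          have := mul_le_mul_of_nonneg_left hp (abs_nonneg (j 2))
          linarith
      _ = euclNorm (horiz j) * (euclNorm (horiz k) * |j 2| + euclNorm (horiz j) * |k 2|) := by ring
  have hB : |k 2 * (j 0 * k 0 + j 1 * k 1) - euclNorm (horiz k) ^ 2 * j 2| ≤
      euclNorm (horiz k) * (euclNorm (horiz k) * |j 2| + euclNorm (horiz j) * |k 2|) := by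
    calc |k 2 * (j 0 * k 0 + j 1 * k 1) - euclNorm (horiz k) ^ 2 * j 2| ≤
        |k 2 * (j 0 * k 0 + j 1 * k 1)| + |euclNorm (horiz k) ^ 2 * j 2| := abs_sub _ _
      _ = |k 2| * |j 0 * k 0 + j 1 * k 1| + euclNorm (horiz k) ^ 2 * |j 2| := by
          rw [abs_mul, abs_mul, abs_of_nonneg (pow_nonneg (euclNorm_nonneg _) 2)]
      _ ≤ |k 2| * (euclNorm (horiz j) * euclNorm (horiz k)) + euclNorm (horiz k) ^ 2 * |j 2| := by
          have := mul_le_mul_of_nonneg_left hp (abs_nonneg (k 2))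
          linarith
      _ = euclNorm (horiz k) * (euclNorm (horiz k) * |j 2| + euclNorm (horiz j) * |k 2|) := by ring
  have hXb : euclNorm (horiz k) * |j 2| + euclNorm (horiz j) * |k 2| ≤ 2 * (euclNorm j * euclNorm k) := by
    have t1 : euclNorm (horiz k) * |j 2| ≤ euclNorm k * euclNorm j :=
      mul_le_mul hbkn ha3 (abs_nonneg _) (euclNorm_nonneg _)
    have t2 : euclNorm (horiz j) * |k 2| ≤ euclNorm j * euclNorm k :=
      mul_le_mul hajn hb3 (abs_nonneg _) (euclNorm_nonneg _)
    linarith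
  -- bound on the P-inner term
  have hPinner : |(j 0 * k 1 - j 1 * k 0) * (j 0 * k 1 - j 1 * k 0) * j 2 * k 2 +
      (j 2 * (j 0 * k 0 + j 1 * k 1) - euclNorm (horiz j) ^ 2 * k 2) *
        (k 2 * (j 0 * k 0 + j 1 * k 1) - euclNorm (horiz k) ^ 2 * j 2)| ≤
      17 / 4 * (euclNorm (horiz j) * euclNorm (horiz k) * (euclNorm j ^ 2 * euclNorm k ^ 2)) := by
    have step1 : |(j 0 * k 1 - j 1 * k 0) * (j 0 * k 1 - j 1 * k 0) * j 2 * k 2| ≤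
        euclNorm (horiz j) * euclNorm (horiz k) * (euclNorm j ^ 2 / 2 * (euclNorm k ^ 2 / 2)) := by
      rw [abs_mul, abs_mul, abs_mul]
      have hww : |j 0 * k 1 - j 1 * k 0| * |j 0 * k 1 - j 1 * k 0| ≤
          (euclNorm (horiz j) * euclNorm (horiz k)) * (euclNorm (horiz j) * euclNorm (horiz k)) :=
        mul_le_mul hw hw (abs_nonneg _) (by positivity)
      calc |j 0 * k 1 - j 1 * k 0| * |j 0 * k 1 - j 1 * k 0| * |j 2| * |k 2| ≤
          (euclNorm (horiz j) * euclNorm (horiz k)) * (euclNorm (horiz j) * euclNorm (horiz k)) *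
            |j 2| * |k 2| := by
            have h0 : (0:ℝ) ≤ |j 2| * |k 2| := by positivity
            nlinarith [abs_nonneg (j 2), abs_nonneg (k 2), hww]
        _ = euclNorm (horiz j) * euclNorm (horiz k) *
            ((euclNorm (horiz j) * |j 2|) * (euclNorm (horiz k) * |k 2|)) := by ring
        _ ≤ euclNorm (horiz j) * euclNorm (horiz k) * (euclNorm j ^ 2 / 2 * (euclNorm k ^ 2 / 2)) := by
            have h1 : (euclNorm (horiz j) * |j 2|) * (euclNorm (horiz k) * |k 2|) ≤
                euclNorm j ^ 2 / 2 * (euclNorm k ^ 2 / 2) :=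
              mul_le_mul hhalfj hhalfk (by positivity) (by positivity)
            exact mul_le_mul_of_nonneg_left h1 (by positivity)
    have step2 : |(j 2 * (j 0 * k 0 + j 1 * k 1) - euclNorm (horiz j) ^ 2 * k 2) *
        (k 2 * (j 0 * k 0 + j 1 * k 1) - euclNorm (horiz k) ^ 2 * j 2)| ≤
        euclNorm (horiz j) * euclNorm (horiz k) * (4 * (euclNorm j ^ 2 * euclNorm k ^ 2)) := by
      rw [abs_mul]
      calc |j 2 * (j 0 * k 0 + j 1 * k 1) - euclNorm (horiz j) ^ 2 * k 2| *
          |k 2 * (j 0 * k 0 + j 1 * k 1) - euclNorm (horiz k) ^ 2 * j 2| ≤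
          (euclNorm (horiz j) * (euclNorm (horiz k) * |j 2| + euclNorm (horiz j) * |k 2|)) *
            (euclNorm (horiz k) * (euclNorm (horiz k) * |j 2| + euclNorm (horiz j) * |k 2|)) :=
          mul_le_mul hA hB (abs_nonneg _) (by positivity)
        _ = euclNorm (horiz j) * euclNorm (horiz k) *
            ((euclNorm (horiz k) * |j 2| + euclNorm (horiz j) * |k 2|) ^ 2) := by ring
        _ ≤ euclNorm (horiz j) * euclNorm (horiz k) * (4 * (euclNorm j ^ 2 * euclNorm k ^ 2)) := by
            apply mul_le_mul_of_nonneg_left _ (by positivity)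
            have h0 : (0:ℝ) ≤ euclNorm (horiz k) * |j 2| + euclNorm (horiz j) * |k 2| := by positivity
            nlinarith [hXb]
    calc |(j 0 * k 1 - j 1 * k 0) * (j 0 * k 1 - j 1 * k 0) * j 2 * k 2 +
        (j 2 * (j 0 * k 0 + j 1 * k 1) - euclNorm (horiz j) ^ 2 * k 2) *
          (k 2 * (j 0 * k 0 + j 1 * k 1) - euclNorm (horiz k) ^ 2 * j 2)| ≤
        |(j 0 * k 1 - j 1 * k 0) * (j 0 * k 1 - j 1 * k 0) * j 2 * k 2| +
        |(j 2 * (j 0 * k 0 + j 1 * k 1) - euclNorm (horiz j) ^ 2 * k 2) *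
          (k 2 * (j 0 * k 0 + j 1 * k 1) - euclNorm (horiz k) ^ 2 * j 2)| := abs_add_le _ _
      _ ≤ euclNorm (horiz j) * euclNorm (horiz k) * (euclNorm j ^ 2 / 2 * (euclNorm k ^ 2 / 2)) +
          euclNorm (horiz j) * euclNorm (horiz k) * (4 * (euclNorm j ^ 2 * euclNorm k ^ 2)) := by
          linarith
      _ ≤ 17 / 4 * (euclNorm (horiz j) * euclNorm (horiz k) * (euclNorm j ^ 2 * euclNorm k ^ 2)) := by
          nlinarith [mul_nonneg (mul_nonneg (euclNorm_nonneg (horiz j)) (euclNorm_nonneg (horiz k)))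
            (mul_nonneg (sq_nonneg (euclNorm j)) (sq_nonneg (euclNorm k)))]
  have hQinner : |(j 0 * k 1 - j 1 * k 0)| *
      |r * euclNorm (horiz k) ^ 2 * euclNorm j * j 2 - s * euclNorm (horiz j) ^ 2 * euclNorm k * k 2| ≤
      2 * (euclNorm (horiz j) * euclNorm (horiz k) * (euclNorm j ^ 2 * euclNorm k ^ 2)) := by
    have hc : |r * euclNorm (horiz k) ^ 2 * euclNorm j * j 2 - s * euclNorm (horiz j) ^ 2 * euclNorm k * k 2| ≤
        2 * (euclNorm j ^ 2 * euclNorm k ^ 2) := by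
      have e1 : |r * euclNorm (horiz k) ^ 2 * euclNorm j * j 2| = euclNorm (horiz k) ^ 2 * euclNorm j * |j 2| := by
        rw [abs_mul, abs_mul, abs_mul, hr1, abs_of_nonneg (pow_nonneg (euclNorm_nonneg _) 2),
          abs_of_nonneg (euclNorm_nonneg _), one_mul]
      have e2 : |s * euclNorm (horiz j) ^ 2 * euclNorm k * k 2| = euclNorm (horiz j) ^ 2 * euclNorm k * |k 2| := by
        rw [abs_mul, abs_mul, abs_mul, hs1, abs_of_nonneg (pow_nonneg (euclNorm_nonneg _) 2),
          abs_of_nonneg (euclNorm_nonneg _), one_mul]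
      have t1 : euclNorm (horiz k) ^ 2 * euclNorm j * |j 2| ≤ euclNorm j ^ 2 * euclNorm k ^ 2 := by
        have hb2 : euclNorm (horiz k) ^ 2 ≤ euclNorm k ^ 2 :=
          pow_le_pow_left₀ (euclNorm_nonneg _) hbkn 2
        have := mul_le_mul hb2 (mul_le_mul_of_nonneg_left ha3 (euclNorm_nonneg j))
          (by positivity) (sq_nonneg _)
        calc euclNorm (horiz k) ^ 2 * euclNorm j * |j 2| =
            euclNorm (horiz k) ^ 2 * (euclNorm j * |j 2|) := by ring
          _ ≤ euclNorm k ^ 2 * (euclNorm j * euclNorm j) := this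
          _ = euclNorm j ^ 2 * euclNorm k ^ 2 := by ring
      have t2 : euclNorm (horiz j) ^ 2 * euclNorm k * |k 2| ≤ euclNorm j ^ 2 * euclNorm k ^ 2 := by
        have ha2 : euclNorm (horiz j) ^ 2 ≤ euclNorm j ^ 2 :=
          pow_le_pow_left₀ (euclNorm_nonneg _) hajn 2
        have := mul_le_mul ha2 (mul_le_mul_of_nonneg_left hb3 (euclNorm_nonneg k))
          (by positivity) (sq_nonneg _)
        calc euclNorm (horiz j) ^ 2 * euclNorm k * |k 2| =
            euclNorm (horiz j) ^ 2 * (euclNorm k * |k 2|) := by ring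
          _ ≤ euclNorm j ^ 2 * (euclNorm k * euclNorm k) := this
          _ = euclNorm j ^ 2 * euclNorm k ^ 2 := by ring
      calc |r * euclNorm (horiz k) ^ 2 * euclNorm j * j 2 - s * euclNorm (horiz j) ^ 2 * euclNorm k * k 2| ≤
          |r * euclNorm (horiz k) ^ 2 * euclNorm j * j 2| + |s * euclNorm (horiz j) ^ 2 * euclNorm k * k 2| :=
          abs_sub _ _
        _ = euclNorm (horiz k) ^ 2 * euclNorm j * |j 2| + euclNorm (horiz j) ^ 2 * euclNorm k * |k 2| := by
            rw [e1, e2]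
        _ ≤ 2 * (euclNorm j ^ 2 * euclNorm k ^ 2) := by linarith [t1, t2]
    calc |(j 0 * k 1 - j 1 * k 0)| *
        |r * euclNorm (horiz k) ^ 2 * euclNorm j * j 2 - s * euclNorm (horiz j) ^ 2 * euclNorm k * k 2| ≤
        (euclNorm (horiz j) * euclNorm (horiz k)) * (2 * (euclNorm j ^ 2 * euclNorm k ^ 2)) :=
        mul_le_mul hw hc (abs_nonneg _) (by positivity)
      _ = 2 * (euclNorm (horiz j) * euclNorm (horiz k) * (euclNorm j ^ 2 * euclNorm k ^ 2)) := by ring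
  -- combine into the bound on |P| + |Q|
  have hPb : |P| ≤ |r * euclNorm j * k 2 + s * euclNorm k * j 2| *
      (17 / 4 * (euclNorm (horiz j) * euclNorm (horiz k) * (euclNorm j ^ 2 * euclNorm k ^ 2))) := by
    rw [hPdef, abs_mul]
    exact mul_le_mul_of_nonneg_left hPinner (abs_nonneg _)
  have hQb : |Q| ≤ |r * euclNorm j * k 2 + s * euclNorm k * j 2| *
      (2 * (euclNorm (horiz j) * euclNorm (horiz k) * (euclNorm j ^ 2 * euclNorm k ^ 2))) := by
    rw [hQdef, abs_mul, abs_mul, mul_assoc]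
    exact mul_le_mul_of_nonneg_left hQinner (abs_nonneg _)
  -- |D|
  have hDabs : |D| = 2 * (euclNorm j * euclNorm k * euclNorm (horiz j) * euclNorm (horiz k) * euclNorm (j + k)) *
      |j 2 * k 2| := by
    rw [hDdef, abs_mul, abs_of_pos (by positivity :
      (0:ℝ) < 2 * (euclNorm j * euclNorm k * euclNorm (horiz j) * euclNorm (horiz k) * euclNorm (j + k)))]
  have hjk3abs : (0:ℝ) < |j 2 * k 2| := abs_pos.mpr hjk3
  -- |omg sum|
  have homg : |omg j r + omg k s| = |r * euclNorm j * k 2 + s * euclNorm k * j 2| / |j 2 * k 2| := by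
    have e : omg j r + omg k s = (r * euclNorm j * k 2 + s * euclNorm k * j 2) / (j 2 * k 2) := by
      rw [omg, omg]
      field_simp
    rw [e, abs_div]
  have hK : (25 / 4 : ℝ) ≤ 4 + 6 / (1 - θ₀ ^ 2) := by
    have h : 0 < 1 - θ₀ ^ 2 := by nlinarith
    have h6 : (6:ℝ) ≤ 6 / (1 - θ₀ ^ 2) := by
      rw [le_div_iff₀ h]
      nlinarith
    linarith
  -- final chain
  rw [homg]
  calc ‖Brs0 M j k (j + k) r s + Brs0 M k j (j + k) s r‖
      = M * (‖((P : ℝ) : ℂ) + ((Q : ℝ) : ℂ) * Complex.I‖ / |D|) := by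
        rw [key, norm_mul, norm_div, Complex.norm_real, Complex.norm_real, Real.norm_eq_abs, Real.norm_eq_abs, abs_of_pos hM]
    _ ≤ M * ((|P| + |Q|) / |D|) := by
        have h2 : ‖((P : ℝ) : ℂ) + ((Q : ℝ) : ℂ) * Complex.I‖ ≤ |P| + |Q| := by
          calc ‖((P : ℝ) : ℂ) + ((Q : ℝ) : ℂ) * Complex.I‖ ≤
              ‖((P : ℝ) : ℂ)‖ + ‖((Q : ℝ) : ℂ) * Complex.I‖ :=
              norm_add_le _ _
            _ = |P| + |Q| := by
                rw [norm_mul, Complex.norm_I, Complex.norm_real, Complex.norm_real, mul_one, Real.norm_eq_abs, Real.norm_eq_abs]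
        gcongr
    _ ≤ M * ((|r * euclNorm j * k 2 + s * euclNorm k * j 2| *
          (25 / 4 * (euclNorm (horiz j) * euclNorm (horiz k) * (euclNorm j ^ 2 * euclNorm k ^ 2)))) / |D|) := by
        gcongr
        linarith [hPb, hQb]
    _ = M / 2 * (25 / 4) * (euclNorm j * euclNorm k / euclNorm (j + k)) *
          (|r * euclNorm j * k 2 + s * euclNorm k * j 2| / |j 2 * k 2|) := by
        rw [hDabs]
        field_simp
    _ ≤ M / 2 * (4 + 6 / (1 - θ₀ ^ 2)) * (euclNorm j * euclNorm k / euclNorm (j + k)) *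
          (|r * euclNorm j * k 2 + s * euclNorm k * j 2| / |j 2 * k 2|) := by
        gcongr
end
end

section
/- Let ε > 0, μ > 0 and F₀, F₁ ≥ 0. Let f : ℝ → ℂ be differentiable with |f(t)| ≤ F₀ and |f′(t)| ≤ F₁ for all t ≥ 0, and let x : ℝ → ℂ be differentiable and satisfy x′(t) + (i/ε) x(t) + μ x(t) = f(t) for all t ≥ 0. Then for all t ≥ 0, |x(t)| ≤ e^{−μt} |x(0)| + ε (2F₀ + F₁/μ). In particular, x eventually decays to a size of order ε, uniformly in the high-frequency parameter 1/ε. -/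
noncomputable section

/-- geostrophic decay for the one-dimensional damped
fast-oscillator model x′ + (i/ε)x + μx = f. -/
theorem fast_oscillator_decay
    (ε μ F₀ F₁ : ℝ) (hε : 0 < ε) (hμ : 0 < μ) (hF₀ : 0 ≤ F₀) (hF₁ : 0 ≤ F₁)
    (f x : ℝ → ℂ) (hf : Differentiable ℝ f) (hx : Differentiable ℝ x)
    (hfb : ∀ t : ℝ, 0 ≤ t → ‖f t‖ ≤ F₀)
    (hfd : ∀ t : ℝ, 0 ≤ t → ‖deriv f t‖ ≤ F₁)
    (hode : ∀ t : ℝ, 0 ≤ t →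
      deriv x t + (Complex.I / (ε : ℂ)) * x t + (μ : ℂ) * x t = f t) :
    ∀ t : ℝ, 0 ≤ t →
      ‖x t‖ ≤
        Real.exp (-μ * t) * ‖x 0‖ + ε * (2 * F₀ + F₁ / μ) := by
  intro t ht
  set l : ℂ := Complex.I / (ε : ℂ) + (μ : ℂ) with hl
  have hεR : (ε : ℂ) ≠ 0 := by exact_mod_cast hε.ne'
  have hlre : l.re = μ := by
    simp [hl, Complex.div_re]
  have hεinv : (ε : ℝ)⁻¹ ≤ ‖l‖ := by
    have him : l.im = ε⁻¹ := by
      field_simp [hl, Complex.div_im, Complex.normSq_apply]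
      rw [hl]; simp [Complex.div_ofReal_im, hε.ne']
    calc (ε : ℝ)⁻¹ = |l.im| := by rw [him, abs_of_pos (by positivity)]
      _ ≤ ‖l‖ := Complex.abs_im_le_norm l
  have habs_pos : 0 < ‖l‖ := lt_of_lt_of_le (by positivity) hεinv
  have hl0 : l ≠ 0 := by
    intro h; rw [h] at habs_pos; simp at habs_pos
  have hinv : (‖l‖)⁻¹ ≤ ε := by
    have := inv_anti₀ (by positivity : (0:ℝ) < ε⁻¹) hεinv
    simpa using this
  -- derivative of the real-to-complex exponential
  have hexp : ∀ s : ℝ, HasDerivAt (fun u : ℝ => Complex.exp (l * u))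
      (l * Complex.exp (l * s)) s := by
    intro s
    have h1 : HasDerivAt (fun u : ℝ => l * (u : ℂ)) l s := by
      simpa using (Complex.ofRealCLM.hasDerivAt (x := s)).const_mul l
    simpa [mul_comm] using h1.cexp
  have hIcc : Set.uIcc (0:ℝ) t = Set.Icc 0 t := Set.uIcc_of_le ht
  -- FTC for g u = exp(l u) * x u
  have hg : ∀ s ∈ Set.uIcc (0:ℝ) t, HasDerivAt (fun u : ℝ => Complex.exp (l * u) * x u)
      (Complex.exp (l * s) * f s) s := by
    intro s hs
    rw [hIcc] at hs
    have := (hexp s).mul (hx s).hasDerivAt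
    convert this using 1
    · rfl
    · rfl
    rw [← hode s hs.1, hl]
    ring
  have hcont_e : Continuous fun s : ℝ => Complex.exp (l * s) :=
    Complex.continuous_exp.comp (continuous_const.mul Complex.continuous_ofReal)
  have hint1 : IntervalIntegrable (fun s : ℝ => Complex.exp (l * s) * f s)
      MeasureTheory.volume 0 t :=
    (hcont_e.mul hf.continuous).intervalIntegrable 0 t
  have key1 : ∫ s in (0:ℝ)..t, Complex.exp (l * s) * f s
      = Complex.exp (l * t) * x t - x 0 := by
    have := intervalIntegral.integral_eq_sub_of_hasDerivAt hg hint1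
    simpa using this
  -- FTC for h u = exp(l u) * (f u / l)
  have hh : ∀ s ∈ Set.uIcc (0:ℝ) t,
      HasDerivAt (fun u : ℝ => Complex.exp (l * u) * (f u / l))
      (Complex.exp (l * s) * f s + Complex.exp (l * s) * (deriv f s / l)) s := by
    intro s _
    have := (hexp s).mul ((hf s).hasDerivAt.div_const l)
    convert this using 1
    · rfl
    · rfl
    field_simp
  have hmeas : Measurable (deriv f) := measurable_deriv f
  have hint2 : IntervalIntegrable (fun s : ℝ => Complex.exp (l * s) * (deriv f s / l))
      MeasureTheory.volume 0 t := by
    apply IntervalIntegrable.mono_fun'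
      (g := fun _ : ℝ => Real.exp (μ * t) * (F₁ * ε))
    · exact intervalIntegrable_const
    · exact (hcont_e.measurable.mul (hmeas.div_const l)).aestronglyMeasurable
    · filter_upwards [MeasureTheory.ae_restrict_mem measurableSet_uIoc] with s hs
      rw [Set.uIoc_of_le ht] at hs
      have hs0 : (0:ℝ) ≤ s := le_of_lt hs.1
      have h1 : ‖Complex.exp (l * s) * (deriv f s / l)‖
          = Real.exp (μ * s) * (‖deriv f s‖ / ‖l‖) := by
        simp [norm_mul, norm_div, Complex.norm_exp,
          Complex.mul_re, hlre]
      rw [h1]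
      have h2 : ‖deriv f s‖ / ‖l‖ ≤ F₁ * ε := by
        rw [div_eq_mul_inv]
        exact mul_le_mul (hfd s hs0) hinv (by positivity) hF₁
      have h3 : Real.exp (μ * s) ≤ Real.exp (μ * t) :=
        Real.exp_le_exp.2 (by nlinarith [hs.2])
      exact mul_le_mul h3 h2 (by positivity) (Real.exp_nonneg _)
  have key2 : ∫ s in (0:ℝ)..t,
      (Complex.exp (l * s) * f s + Complex.exp (l * s) * (deriv f s / l))
      = Complex.exp (l * t) * (f t / l) - f 0 / l := by
    have := intervalIntegral.integral_eq_sub_of_hasDerivAt hh (hint1.add hint2)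
    simpa using this
  set J : ℂ := ∫ s in (0:ℝ)..t, Complex.exp (l * s) * (deriv f s / l) with hJ
  have key3 : Complex.exp (l * t) * x t - x 0
      = Complex.exp (l * t) * (f t / l) - f 0 / l - J := by
    rw [← key1, ← key2, intervalIntegral.integral_add hint1 hint2, hJ]
    ring
  set E : ℂ := Complex.exp (l * t) with hE
  have hExt : E * x t = x 0 + E * (f t / l) - f 0 / l - J := by
    linear_combination key3
  have habsE : ‖E‖ = Real.exp (μ * t) := by
    rw [hE, Complex.norm_exp]
    congr 1
    simp [Complex.mul_re, hlre]
  have hmul : Real.exp (-μ * t) * Real.exp (μ * t) = 1 := by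
    rw [← Real.exp_add]; ring_nf; exact Real.exp_zero
  have hA1 : Real.exp (-μ * t) ≤ 1 := Real.exp_le_one_iff.2 (by nlinarith)
  -- bound on J
  have hJbound : ‖J‖ ≤ F₁ * ε * ((Real.exp (μ * t) - 1) / μ) := by
    have hgint : IntervalIntegrable (fun s : ℝ => F₁ * ε * Real.exp (μ * s))
        MeasureTheory.volume 0 t :=
      (continuous_const.mul (Real.continuous_exp.comp (continuous_const.mul continuous_id))).intervalIntegrable 0 t
    have hb : ∀ᵐ (s : ℝ) ∂MeasureTheory.volume.restrict (Set.uIoc (0:ℝ) t),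
        ‖Complex.exp (l * s) * (deriv f s / l)‖ ≤ F₁ * ε * Real.exp (μ * s) := by
      filter_upwards [MeasureTheory.ae_restrict_mem measurableSet_uIoc] with s hs
      rw [Set.uIoc_of_le ht] at hs
      have hs0 : (0:ℝ) ≤ s := le_of_lt hs.1
      have h1 : ‖Complex.exp (l * s) * (deriv f s / l)‖
          = Real.exp (μ * s) * (‖deriv f s‖ / ‖l‖) := by
        simp [norm_mul, norm_div, Complex.norm_exp,
          Complex.mul_re, hlre]
      rw [h1, mul_comm]
      apply mul_le_mul_of_nonneg_right _ (Real.exp_nonneg _)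
      rw [div_eq_mul_inv]
      exact mul_le_mul (hfd s hs0) hinv (by positivity) hF₁
    have := intervalIntegral.norm_integral_le_of_norm_le ht
      (by rw [Set.uIoc_of_le ht] at hb; exact (MeasureTheory.ae_restrict_iff' measurableSet_Ioc).1 hb) hgint
    have hval : ∫ s in (0:ℝ)..t, F₁ * ε * Real.exp (μ * s)
        = F₁ * ε * ((Real.exp (μ * t) - 1) / μ) := by
      have hd : ∀ s ∈ Set.uIcc (0:ℝ) t,
          HasDerivAt (fun u : ℝ => F₁ * ε * (Real.exp (μ * u) / μ))
          (F₁ * ε * Real.exp (μ * s)) s := by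
        intro s _
        have : HasDerivAt (fun u : ℝ => Real.exp (μ * u)) (μ * Real.exp (μ * s)) s := by
          simpa [mul_comm] using ((hasDerivAt_id s).const_mul μ).exp
        have := (this.div_const μ).const_mul (F₁ * ε)
        convert this using 1
        · rfl
        · rfl
        rw [mul_div_cancel_left₀ _ hμ.ne']
      rw [intervalIntegral.integral_eq_sub_of_hasDerivAt hd hgint]
      field_simp
      rw [mul_zero, Real.exp_zero]
    rw [hval] at this
    have hnn : 0 ≤ F₁ * ε * ((Real.exp (μ * t) - 1) / μ) := by
      have h1 : (1:ℝ) ≤ Real.exp (μ * t) := Real.one_le_exp (by positivity)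
      exact mul_nonneg (by positivity) (div_nonneg (by linarith) hμ.le)
    exact this
  -- term bounds
  have T2 : ‖f t / l‖ ≤ F₀ * ε := by
    rw [norm_div, div_eq_mul_inv]
    exact mul_le_mul (hfb t ht) hinv (by positivity) hF₀
  have T3 : ‖f 0 / l‖ ≤ F₀ * ε := by
    rw [norm_div, div_eq_mul_inv]
    exact mul_le_mul (hfb 0 le_rfl) hinv (by positivity) hF₀
  -- triangle inequality on E * x t
  have tri : Real.exp (μ * t) * ‖x t‖
      ≤ ‖x 0‖ + Real.exp (μ * t) * ‖f t / l‖
        + ‖f 0 / l‖ + ‖J‖ := by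
    have h0 : Real.exp (μ * t) * ‖x t‖ = ‖E * x t‖ := by
      rw [norm_mul, habsE]
    rw [h0, hExt]
    calc ‖x 0 + E * (f t / l) - f 0 / l - J‖
        ≤ ‖x 0 + E * (f t / l) - f 0 / l‖ + ‖J‖ :=
          norm_sub_le _ _
      _ ≤ (‖x 0 + E * (f t / l)‖ + ‖f 0 / l‖) + ‖J‖ := by
          gcongr
          exact norm_sub_le _ _
      _ ≤ (‖x 0‖ + ‖E * (f t / l)‖ + ‖f 0 / l‖)
            + ‖J‖ := by
          gcongr
          exact norm_add_le _ _
      _ = ‖x 0‖ + Real.exp (μ * t) * ‖f t / l‖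
            + ‖f 0 / l‖ + ‖J‖ := by
          rw [norm_mul, habsE]
  -- multiply through by exp(-μ t)
  have hmain : ‖x t‖
      ≤ Real.exp (-μ * t) * (‖x 0‖ + Real.exp (μ * t) * ‖f t / l‖
          + ‖f 0 / l‖ + ‖J‖) := by
    have h1 : ‖x t‖
        = Real.exp (-μ * t) * (Real.exp (μ * t) * ‖x t‖) := by
      rw [← mul_assoc, hmul, one_mul]
    rw [h1]
    exact mul_le_mul_of_nonneg_left tri (Real.exp_nonneg _)
  refine hmain.trans ?_
  have hJ4 : Real.exp (-μ * t) * ‖J‖ ≤ ε * (F₁ / μ) := by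
    have heq : Real.exp (-μ * t) * (F₁ * ε * ((Real.exp (μ * t) - 1) / μ))
        = F₁ * ε * ((1 - Real.exp (-μ * t)) / μ) := by
      have h5 : Real.exp (-μ * t) * (Real.exp (μ * t) - 1) = 1 - Real.exp (-μ * t) := by
        rw [mul_sub, hmul, mul_one]
      rw [← h5]; ring
    calc Real.exp (-μ * t) * ‖J‖
        ≤ Real.exp (-μ * t) * (F₁ * ε * ((Real.exp (μ * t) - 1) / μ)) :=
          mul_le_mul_of_nonneg_left hJbound (Real.exp_nonneg _)
      _ = F₁ * ε * ((1 - Real.exp (-μ * t)) / μ) := heq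
      _ ≤ F₁ * ε * (1 / μ) := by
          gcongr
          have : 0 ≤ Real.exp (-μ * t) := Real.exp_nonneg _
          linarith
      _ = ε * (F₁ / μ) := by ring
  have hT2' : Real.exp (-μ * t) * (Real.exp (μ * t) * ‖f t / l‖) ≤ F₀ * ε := by
    rw [← mul_assoc, hmul, one_mul]; exact T2
  have hT3' : Real.exp (-μ * t) * ‖f 0 / l‖ ≤ F₀ * ε := by
    calc Real.exp (-μ * t) * ‖f 0 / l‖ ≤ 1 * (F₀ * ε) :=
          mul_le_mul hA1 T3 (by positivity) one_pos.le
      _ = F₀ * ε := one_mul _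
  have hexpnn : (0:ℝ) ≤ Real.exp (-μ * t) := Real.exp_nonneg _
  nlinarith [hJ4, hT2', hT3']
end
end
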